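/- Let n, k ≥ 2, let f be a k-fold on (ℂⁿ,0) and let φ be a reflection on (ℂⁿ,0) associated with f (i.e. f ∘ φ = f as germs). Then the singular set of f coincides with the fixed-point set of φ as germs of sets at 0: there is a neighborhood U of 0 in ℂⁿ such that {x ∈ U : the derivative df(x) is not invertible} = {x ∈ U : φ(x) = x}. -/

import Mathlib

noncomputable section

open Filter Function

/-- ℂⁿ as the space of functions `Fin n → ℂ`. -/
abbrev Cn (n : ℕ) : Type := Fin n → ℂ

/-- Equality of germs at 0 of maps (ℂⁿ,0) → (ℂⁿ,0). -/
def GermEq {n : ℕ} (f g : Cn n → Cn n) : Prop := f =ᶠ[nhds 0] g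

/-- Germ at 0 of a holomorphic map (ℂⁿ,0) → (ℂⁿ,0): holomorphic on a
neighborhood of 0 and sending 0 to 0. -/
def IsHoloGerm {n : ℕ} (f : Cn n → Cn n) : Prop :=
  f 0 = 0 ∧ ∀ᶠ x in nhds (0 : Cn n), AnalyticAt ℂ f x

/-- Germ of biholomorphism on (ℂⁿ,0): holomorphic germ with invertible
derivative at 0. -/
def IsBiholGerm {n : ℕ} (h : Cn n → Cn n) : Prop :=
  IsHoloGerm h ∧ IsUnit (fderiv ℂ h 0)

/-- φ has order exactly r as a germ at 0 (φ^[r] = id as germs, r minimal). -/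
def HasOrderGerm {n : ℕ} (φ : Cn n → Cn n) (r : ℕ) : Prop :=
  GermEq (φ^[r]) id ∧ ∀ m : ℕ, 0 < m → m < r → ¬ GermEq (φ^[m]) id

/-- The fixed-point set of φ near 0 is a complex submanifold of codimension 1:
locally the zero set of a holomorphic submersion F : (ℂⁿ,0) → (ℂ,0). -/
def FixIsHypersurface {n : ℕ} (φ : Cn n → Cn n) : Prop :=
  ∃ F : Cn n → ℂ, F 0 = 0 ∧ AnalyticAt ℂ F 0 ∧ fderiv ℂ F 0 ≠ 0 ∧
    ∀ᶠ x in nhds (0 : Cn n), (φ x = x ↔ F x = 0)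

/-- A reflection on (ℂⁿ,0): germ of biholomorphism of finite order ≥ 2 whose
fixed-point set is a codimension-1 complex submanifold. -/
def IsReflection {n : ℕ} (φ : Cn n → Cn n) : Prop :=
  IsBiholGerm φ ∧ (∃ r : ℕ, 2 ≤ r ∧ HasOrderGerm φ r) ∧ FixIsHypersurface φ

/-- A reflection of order exactly k. -/
def IsReflectionOfOrder {n : ℕ} (φ : Cn n → Cn n) (k : ℕ) : Prop :=
  IsBiholGerm φ ∧ HasOrderGerm φ k ∧ FixIsHypersurface φ

/-- The canonical k-fold f₁(x) = (x₁^k, x₂, …, xₙ). -/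
def canonFold (n k : ℕ) : Cn n → Cn n := fun x i => if (i : ℕ) = 0 then x i ^ k else x i

/-- The canonical reflection φ₁(x) = (λ x₁, x₂, …, xₙ) with λ = e^{2πi/k}. -/
def canonRefl (n k : ℕ) : Cn n → Cn n :=
  fun x i => if (i : ℕ) = 0 then Complex.exp (2 * (Real.pi : ℂ) * Complex.I / (k : ℂ)) * x i
    else x i

/-- f is a k-fold: a holomorphic germ 𝒜-equivalent to the canonical k-fold,
i.e. f = l ∘ f₁ ∘ h⁻¹ as germs for germs of biholomorphisms h, l
(equivalently, f ∘ h = l ∘ f₁ as germs). -/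
def IsKFold {n : ℕ} (k : ℕ) (f : Cn n → Cn n) : Prop :=
  IsHoloGerm f ∧ ∃ h l : Cn n → Cn n, IsBiholGerm h ∧ IsBiholGerm l ∧
    GermEq (f ∘ h) (l ∘ canonFold n k)

/-- The canonical k-fold in the i-th coordinate: fᵢ(x) = (x₁, …, xᵢ^k, …, xₙ). -/
def foldAt (n k : ℕ) (i : Fin n) : Cn n → Cn n := fun x j => if j = i then x j ^ k else x j

namespace StmtAux

/-! ### Linear algebra auxiliaries -/

theorem injective_of_isUnit {n : ℕ} {T : Cn n →L[ℂ] Cn n} (hu : IsUnit T) :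
    Function.Injective T := by
  obtain ⟨u, hu'⟩ := hu
  have key : ∀ v, (↑u⁻¹ : Cn n →L[ℂ] Cn n) (T v) = v := by
    intro v
    rw [← hu', ← ContinuousLinearMap.mul_apply, u.inv_mul, ContinuousLinearMap.one_apply]
  intro a b hab
  rw [← key a, ← key b, hab]

theorem isUnit_of_injective {n : ℕ} {T : Cn n →L[ℂ] Cn n} (h : Function.Injective T) :
    IsUnit T := by
  have hs : Function.Surjective (T : Cn n →ₗ[ℂ] Cn n) :=
    LinearMap.injective_iff_surjective.mp h
  let e0 : Cn n ≃ₗ[ℂ] Cn n := LinearEquiv.ofBijective (T : Cn n →ₗ[ℂ] Cn n) ⟨h, hs⟩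
  let e : Cn n ≃L[ℂ] Cn n := e0.toContinuousLinearEquiv
  have he : ∀ x, e x = T x := fun x => rfl
  refine ⟨⟨T, e.symm.toContinuousLinearMap, ?_, ?_⟩, rfl⟩
  · refine ContinuousLinearMap.ext fun x => ?_
    simp only [ContinuousLinearMap.mul_apply, ContinuousLinearMap.one_apply,
      ContinuousLinearEquiv.coe_coe]
    rw [← he]
    exact e.apply_symm_apply x
  · refine ContinuousLinearMap.ext fun x => ?_
    simp only [ContinuousLinearMap.mul_apply, ContinuousLinearMap.one_apply,
      ContinuousLinearEquiv.coe_coe]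
    rw [← he]
    exact e.symm_apply_apply x

theorem exists_equiv_of_isUnit {n : ℕ} {T : Cn n →L[ℂ] Cn n} (hu : IsUnit T) :
    ∃ e : Cn n ≃L[ℂ] Cn n, (e : Cn n →L[ℂ] Cn n) = T := by
  refine ⟨ContinuousLinearEquiv.unitsEquiv ℂ (Cn n) hu.unit, ?_⟩
  refine ContinuousLinearMap.ext fun x => ?_
  rw [ContinuousLinearEquiv.coe_coe, ContinuousLinearEquiv.unitsEquiv_apply, hu.unit_spec]

theorem isUnit_mul_iff_left {M : Type*} [Monoid M] {a b : M} (hb : IsUnit b) :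
    IsUnit (a * b) ↔ IsUnit a := by
  rw [← hb.unit_spec]
  exact Units.isUnit_mul_units a hb.unit

theorem isUnit_mul_iff_right {M : Type*} [Monoid M] {a b : M} (ha : IsUnit a) :
    IsUnit (a * b) ↔ IsUnit b := by
  rw [← ha.unit_spec]
  exact Units.isUnit_units_mul ha.unit b

theorem exists_single_ne_zero {n : ℕ} {T : Cn n →L[ℂ] ℂ} (hT : T ≠ 0) :
    ∃ j : Fin n, T (Pi.single j 1) ≠ 0 := by
  by_contra hc
  push_neg at hc
  apply hT
  refine ContinuousLinearMap.ext fun x => ?_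
  have hx : x = ∑ j : Fin n, x j • (Pi.single j (1 : ℂ) : Cn n) := by
    funext i
    simp [Pi.single_apply, Finset.sum_apply, eq_comm]
  rw [hx, map_sum]
  simp [hc]

/-! ### The diagonal model map and the derivative of the canonical fold -/

/-- The diagonal-type map `x ↦ (c x₀, x₁, …)`. -/
def dmap (n : ℕ) (c : ℂ) : Cn n →L[ℂ] Cn n :=
  ContinuousLinearMap.pi (fun i => if (i : ℕ) = 0 then c • ContinuousLinearMap.proj i
    else ContinuousLinearMap.proj i)

theorem dmap_apply {n : ℕ} (c : ℂ) (x : Cn n) (i : Fin n) :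
    dmap n c x i = if (i : ℕ) = 0 then c * x i else x i := by
  by_cases hi : (i : ℕ) = 0 <;>
    simp [dmap, ContinuousLinearMap.pi_apply, hi]

theorem dmap_mul {n : ℕ} (c c' : ℂ) : dmap n c * dmap n c' = dmap n (c * c') := by
  refine ContinuousLinearMap.ext fun x => ?_
  funext i
  simp only [ContinuousLinearMap.mul_apply, dmap_apply]
  by_cases hi : (i : ℕ) = 0 <;> simp [hi, mul_assoc]

theorem dmap_one {n : ℕ} : dmap n 1 = 1 := by
  refine ContinuousLinearMap.ext fun x => ?_
  funext i
  simp [dmap_apply]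

theorem isUnit_dmap {n : ℕ} {c : ℂ} (hc : c ≠ 0) : IsUnit (dmap n c) :=
  ⟨⟨dmap n c, dmap n c⁻¹,
    by rw [dmap_mul, mul_inv_cancel₀ hc, dmap_one],
    by rw [dmap_mul, inv_mul_cancel₀ hc, dmap_one]⟩, rfl⟩

theorem not_isUnit_dmap_zero {n : ℕ} [NeZero n] : ¬ IsUnit (dmap n (0 : ℂ)) := by
  intro hu
  have hinj := injective_of_isUnit hu
  have h1 : dmap n (0 : ℂ) (Pi.single 0 1) = dmap n (0 : ℂ) 0 := by
    funext i
    rw [dmap_apply, dmap_apply]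
    by_cases hi : (i : ℕ) = 0
    · simp [hi]
    · have hne : i ≠ 0 := by
        intro h; exact hi (by simp [h])
      simp [hi, Pi.single_eq_of_ne hne]
  have := hinj h1
  have h2 : (Pi.single (0 : Fin n) (1 : ℂ) : Cn n) 0 = (0 : Cn n) 0 := by rw [this]
  simp at h2

theorem proj_comp_dmap {n : ℕ} (c : ℂ) (i : Fin n) :
    (ContinuousLinearMap.proj i).comp (dmap n c) =
      if (i : ℕ) = 0 then c • (ContinuousLinearMap.proj i : Cn n →L[ℂ] ℂ)
      else ContinuousLinearMap.proj i := by
  by_cases hi : (i : ℕ) = 0 <;>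
  · refine ContinuousLinearMap.ext fun x => ?_
    simp [ContinuousLinearMap.comp_apply, dmap_apply, hi]

theorem hasFDerivAt_canonFold {n : ℕ} [NeZero n] (k : ℕ) (y : Cn n) :
    HasFDerivAt (canonFold n k) (dmap n ((k : ℂ) * (y 0) ^ (k - 1))) y := by
  apply hasFDerivAt_pi''
  intro i
  rw [proj_comp_dmap]
  by_cases hi : (i : ℕ) = 0
  · have hi0 : i = 0 := by
      ext; simpa using hi
    simp only [canonFold, hi, if_pos, hi0]
    exact (hasDerivAt_pow k (y 0)).comp_hasFDerivAt y (hasFDerivAt_apply 0 y)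
  · simp only [canonFold, hi, if_neg, if_false]
    exact hasFDerivAt_apply i y

theorem fderiv_canonFold {n : ℕ} [NeZero n] (k : ℕ) (y : Cn n) :
    fderiv ℂ (canonFold n k) y = dmap n ((k : ℂ) * (y 0) ^ (k - 1)) :=
  (hasFDerivAt_canonFold k y).fderiv

theorem canonFold_zero {n k : ℕ} (hk : 2 ≤ k) : canonFold n k 0 = 0 := by
  funext i
  by_cases hi : (i : ℕ) = 0 <;>
    simp [canonFold, hi, zero_pow (by omega : k ≠ 0)]

theorem isUnit_fderiv_canonFold {n : ℕ} [NeZero n] {k : ℕ} (hk : 2 ≤ k) (y : Cn n) :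
    IsUnit (fderiv ℂ (canonFold n k) y) ↔ y 0 ≠ 0 := by
  rw [fderiv_canonFold]
  constructor
  · intro hu h0
    rw [h0, zero_pow (by omega : k - 1 ≠ 0), mul_zero] at hu
    exact not_isUnit_dmap_zero hu
  · intro h0
    exact isUnit_dmap (mul_ne_zero (Nat.cast_ne_zero.mpr (by omega)) (pow_ne_zero _ h0))

/-! ### The key hypersurface lemma -/

/-- The linear model for the "replace coordinate j by T" map. -/
def pmap (n : ℕ) (j : Fin n) (T : Cn n →L[ℂ] ℂ) : Cn n →L[ℂ] Cn n :=
  ContinuousLinearMap.pi (fun i => if i = j then T else ContinuousLinearMap.proj i)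

theorem pmap_apply {n : ℕ} {j : Fin n} (T : Cn n →L[ℂ] ℂ) (x : Cn n) (i : Fin n) :
    pmap n j T x i = if i = j then T x else x i := by
  by_cases hi : i = j <;> simp [pmap, ContinuousLinearMap.pi_apply, hi]

theorem proj_comp_pmap {n : ℕ} {j : Fin n} (T : Cn n →L[ℂ] ℂ) (i : Fin n) :
    (ContinuousLinearMap.proj i).comp (pmap n j T) =
      if i = j then T else ContinuousLinearMap.proj i := by
  by_cases hi : i = j <;>
  · refine ContinuousLinearMap.ext fun x => ?_
    simp [ContinuousLinearMap.comp_apply, pmap_apply, hi]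

theorem pmap_injective {n : ℕ} {j : Fin n} {T : Cn n →L[ℂ] ℂ}
    (hT : T (Pi.single j 1) ≠ 0) : Function.Injective (pmap n j T) := by
  rw [injective_iff_map_eq_zero]
  intro x hx
  have hcoord : ∀ i, i ≠ j → x i = 0 := by
    intro i hij
    have := congrFun hx i
    rwa [pmap_apply, if_neg hij] at this
  have hxx : x = Pi.single j (x j) := by
    funext i
    by_cases hij : i = j
    · subst hij; simp
    · simp [Pi.single_eq_of_ne hij, hcoord i hij]
  have hTx : T x = 0 := by
    have := congrFun hx j
    rwa [pmap_apply, if_pos rfl] at this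
  have hsingle : Pi.single j (x j) = x j • (Pi.single j (1 : ℂ) : Cn n) := by
    rw [← Pi.single_smul, smul_eq_mul, mul_one]
  rw [hxx] at hTx ⊢
  rw [hsingle, map_smul, smul_eq_mul] at hTx
  rcases mul_eq_zero.mp hTx with h | h
  · simp [h, hsingle]
  · exact absurd h hT

/-- If `G` is analytic near `0`, vanishes at `0`, has nonzero differential at `0`,
and its zero set near 0 is contained in the hyperplane `{y 0 = 0}`, then the zero
set contains the hyperplane near 0. -/
theorem hyp_lemma {n : ℕ} [NeZero n] {G : Cn n → ℂ} (hG : AnalyticAt ℂ G 0)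
    (hG0 : G 0 = 0) (hdG : fderiv ℂ G 0 ≠ 0)
    (hzero : ∀ᶠ y in nhds (0 : Cn n), G y = 0 → y 0 = 0) :
    ∀ᶠ y in nhds (0 : Cn n), y 0 = 0 → G y = 0 := by
  obtain ⟨j, hj⟩ := exists_single_ne_zero hdG
  set Φ : Cn n → Cn n := fun y i => if i = j then G y else y i with hΦdef
  obtain ⟨e, he⟩ := exists_equiv_of_isUnit (isUnit_of_injective (pmap_injective hj))
  have hstrict : HasStrictFDerivAt Φ (e : Cn n →L[ℂ] Cn n) 0 := by
    rw [he]
    apply hasStrictFDerivAt_pi''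
    intro i
    rw [proj_comp_pmap]
    by_cases hi : i = j
    · simp only [hΦdef, hi, if_pos]
      exact hG.hasStrictFDerivAt
    · simp only [hΦdef, if_neg hi]
      exact hasStrictFDerivAt_apply i 0
  have hΦ0 : Φ 0 = 0 := by
    funext i; by_cases hi : i = j <;> simp [hΦdef, hi, hG0]
  set Ψ := hstrict.localInverse Φ e 0 with hΨdef
  have hright : ∀ᶠ v in nhds (0 : Cn n), Φ (Ψ v) = v := by
    have := hstrict.eventually_right_inverse
    rwa [hΦ0] at this
  have hΨtend : Tendsto Ψ (nhds 0) (nhds 0) := by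
    have := hstrict.localInverse_tendsto
    rwa [hΦ0] at this
  have hj0 : j = 0 := by
    by_contra hjne
    have hvtend : Tendsto (fun t : ℂ => (Pi.single (0 : Fin n) t : Cn n)) (nhds 0) (nhds 0) := by
      have hc : Continuous (fun t : ℂ => (Pi.single (0 : Fin n) t : Cn n)) := by
        apply continuous_pi
        intro i
        simp only [Pi.single_apply]
        by_cases hi : i = (0 : Fin n)
        · simpa [hi] using continuous_id'
        · simpa [hi] using continuous_const
      simpa [Pi.single_zero] using hc.tendsto 0
    have hKey : ∀ᶠ t in nhds (0 : ℂ),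
        Φ (Ψ (Pi.single 0 t)) = Pi.single 0 t ∧
          (G (Ψ (Pi.single 0 t)) = 0 → (Ψ (Pi.single 0 t)) 0 = 0) :=
      (hvtend.eventually hright).and ((hΨtend.comp hvtend).eventually hzero)
    have hKey' : ∀ᶠ t in nhdsWithin (0 : ℂ) {(0 : ℂ)}ᶜ,
        (Φ (Ψ (Pi.single 0 t)) = Pi.single 0 t ∧
          (G (Ψ (Pi.single 0 t)) = 0 → (Ψ (Pi.single 0 t)) 0 = 0)) ∧ t ∈ ({(0 : ℂ)}ᶜ : Set ℂ) :=
      (hKey.filter_mono nhdsWithin_le_nhds).and self_mem_nhdsWithin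
    obtain ⟨t, ⟨hΦΨ, himp⟩, ht'⟩ := hKey'.exists
    have ht : t ≠ 0 := ht'
    have hGz : G (Ψ (Pi.single 0 t)) = 0 := by
      have hcj := congrFun hΦΨ j
      simp only [hΦdef, if_pos rfl] at hcj
      rw [hcj, Pi.single_eq_of_ne hjne]
    have h0 : (Ψ (Pi.single 0 t)) 0 = t := by
      have hc0 := congrFun hΦΨ 0
      simp only [hΦdef, if_neg (by simpa using (Ne.symm hjne) : ¬ (0 : Fin n) = j)] at hc0
      rw [hc0, Pi.single_eq_same]
    exact ht (h0 ▸ himp hGz)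
  subst hj0
  have hall : ∀ᶠ y in nhds (0 : Cn n),
      Φ (Ψ y) = y ∧ (G (Ψ y) = 0 → (Ψ y) 0 = 0) :=
    hright.and (hΨtend.eventually hzero)
  filter_upwards [hall] with y hy hy0
  obtain ⟨hy1, hy2⟩ := hy
  have hGz : G (Ψ y) = 0 := by
    have hc := congrFun hy1 0
    simp only [hΦdef, if_pos rfl] at hc
    rw [hc, hy0]
  have hz0 : (Ψ y) 0 = 0 := hy2 hGz
  have hzy : Ψ y = y := by
    funext i
    by_cases hi : i = 0
    · rw [hi, hz0, hy0]
    · have hc := congrFun hy1 i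
      simpa only [hΦdef, if_neg hi] using hc
  rw [← hzy, hGz]

/-! ### Fixed points are singular points -/

theorem fix_subset_sing {n : ℕ} {f φ : Cn n → Cn n} {F : Cn n → ℂ}
    (hfan : ∀ᶠ x in nhds (0 : Cn n), AnalyticAt ℂ f x)
    (hφan : ∀ᶠ x in nhds (0 : Cn n), AnalyticAt ℂ φ x)
    (hassoc : f ∘ φ =ᶠ[nhds (0 : Cn n)] f)
    (hFan : AnalyticAt ℂ F 0) (hdF : fderiv ℂ F 0 ≠ 0)
    (hFfix : ∀ᶠ x in nhds (0 : Cn n), (φ x = x ↔ F x = 0)) :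
    ∀ᶠ x in nhds (0 : Cn n), φ x = x → ¬ IsUnit (fderiv ℂ f x) := by
  have hFan' : ∀ᶠ x in nhds (0 : Cn n), AnalyticAt ℂ F x := hFan.eventually_analyticAt
  obtain ⟨ε, hε, hP⟩ := Metric.eventually_nhds_iff.mp
    (hfan.and (hφan.and (hassoc.and (hFan'.and hFfix))))
  set B : Set (Cn n) := Metric.ball 0 ε with hBdef
  have hPB : ∀ x ∈ B, AnalyticAt ℂ f x ∧ AnalyticAt ℂ φ x ∧ (f ∘ φ) x = f x ∧
      AnalyticAt ℂ F x ∧ (φ x = x ↔ F x = 0) := fun x hx => hP (Metric.mem_ball.mp hx)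
  have hBmem : B ∈ nhds (0 : Cn n) := Metric.ball_mem_nhds 0 hε
  have claim : ∀ x ∈ B, φ x = x → ¬ IsUnit (fderiv ℂ f x) := by
    intro x hx hfix hu
    obtain ⟨hfx, hφx, _, _, _⟩ := hPB x hx
    obtain ⟨e, he⟩ := exists_equiv_of_isUnit hu
    have hstrict : HasStrictFDerivAt f (e : Cn n →L[ℂ] Cn n) x := by
      rw [he]; exact hfx.hasStrictFDerivAt
    have hleft : ∀ᶠ z in nhds x, hstrict.localInverse f e x (f z) = z :=
      hstrict.eventually_left_inverse
    have hφtend : Tendsto φ (nhds x) (nhds x) := by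
      have := hφx.continuousAt
      rwa [ContinuousAt, hfix] at this
    have hmemB : ∀ᶠ z in nhds x, z ∈ B := Metric.isOpen_ball.eventually_mem hx
    have hfφ : ∀ᶠ z in nhds x, f (φ z) = f z := by
      filter_upwards [hmemB] with z hz
      exact (hPB z hz).2.2.1
    have hfixev : ∀ᶠ z in nhds x, φ z = z := by
      filter_upwards [hφtend.eventually hleft, hfφ, hleft] with z h1 h2 h3
      rw [h2] at h1
      rw [← h1, h3]
    have hFev : F =ᶠ[nhds x] fun _ => (0 : ℂ) := by
      filter_upwards [hfixev, hmemB] with z h1 hz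
      exact (hPB z hz).2.2.2.2.mp h1
    have hA : AnalyticOnNhd ℂ F B := fun y hy => (hPB y hy).2.2.2.1
    have hzero : Set.EqOn F 0 B :=
      hA.eqOn_zero_of_preconnected_of_eventuallyEq_zero
        (convex_ball (0 : Cn n) ε).isPreconnected hx hFev
    have hF0 : F =ᶠ[nhds (0 : Cn n)] fun _ => (0 : ℂ) :=
      Filter.eventuallyEq_of_mem hBmem hzero
    have : fderiv ℂ F 0 = 0 := by
      rw [hF0.fderiv_eq]
      exact fderiv_const_apply 0
    exact hdF this
  filter_upwards [hBmem] with x hx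
  exact claim x hx

end StmtAux

/-- Proposition 2.9: if a k-fold f is associated with a
reflection φ, then Σ(f) = Fix(φ) as germs of sets at 0. -/
theorem stmt_3 (n k : ℕ) (hn : 2 ≤ n) (hk : 2 ≤ k)
    (f φ : Cn n → Cn n) (hf : IsKFold k f) (hφ : IsReflection φ)
    (hassoc : GermEq (f ∘ φ) f) :
    ∀ᶠ x in nhds (0 : Cn n), (¬ IsUnit (fderiv ℂ f x) ↔ φ x = x) := by
  haveI : NeZero n := ⟨by omega⟩
  obtain ⟨⟨hf0, hfan⟩, h, l, ⟨⟨hh0, hhan⟩, hhd⟩, ⟨⟨hl0, hlan⟩, hld⟩, heq⟩ := hf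
  obtain ⟨⟨⟨hφ0, hφan⟩, hφd⟩, -, F, hF0, hFan, hdF, hFfix⟩ := hφ
  have hassoc' : f ∘ φ =ᶠ[nhds (0 : Cn n)] f := hassoc
  have hE1 := StmtAux.fix_subset_sing hfan hφan hassoc' hFan hdF hFfix
  have hhan0 : AnalyticAt ℂ h 0 := hhan.self_of_nhds
  have hlan0 : AnalyticAt ℂ l 0 := hlan.self_of_nhds
  have hhtend : Tendsto h (nhds 0) (nhds (0 : Cn n)) := by
    have := hhan0.continuousAt
    rwa [ContinuousAt, hh0] at this
  obtain ⟨eh, heh⟩ := StmtAux.exists_equiv_of_isUnit hhd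
  have hstrict : HasStrictFDerivAt h (eh : Cn n →L[ℂ] Cn n) 0 := by
    rw [heh]; exact hhan0.hasStrictFDerivAt
  have hmap : Filter.map h (nhds 0) = nhds (0 : Cn n) := by
    have := hstrict.map_nhds_eq_of_equiv
    rwa [hh0] at this
  have hUh : ∀ᶠ y in nhds (0 : Cn n), IsUnit (fderiv ℂ h y) := by
    have hcont : ContinuousAt (fderiv ℂ h) 0 := hhan0.fderiv.continuousAt
    exact hcont.eventually_mem (Units.isOpen.mem_nhds hhd)
  have hf1tend : Tendsto (canonFold n k) (nhds 0) (nhds (0 : Cn n)) := by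
    have := (StmtAux.hasFDerivAt_canonFold (n := n) k 0).continuousAt
    rwa [ContinuousAt, StmtAux.canonFold_zero hk] at this
  have hUl : ∀ᶠ y in nhds (0 : Cn n), IsUnit (fderiv ℂ l (canonFold n k y)) := by
    have hcont : ContinuousAt (fderiv ℂ l) 0 := hlan0.fderiv.continuousAt
    exact hf1tend.eventually (hcont.eventually_mem (Units.isOpen.mem_nhds hld))
  have heqn : ∀ᶠ y in nhds (0 : Cn n), (f ∘ h) =ᶠ[nhds y] (l ∘ canonFold n k) :=
    heq.eventually_nhds
  have hfhy : ∀ᶠ y in nhds (0 : Cn n), AnalyticAt ℂ f (h y) := hhtend.eventually hfan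
  have hlf1 : ∀ᶠ y in nhds (0 : Cn n), AnalyticAt ℂ l (canonFold n k y) :=
    hf1tend.eventually hlan
  have hkey : ∀ᶠ y in nhds (0 : Cn n), (IsUnit (fderiv ℂ f (h y)) ↔ y 0 ≠ 0) := by
    filter_upwards [heqn, hUh, hUl, hfhy, hlf1, hhan] with y hEq hUhy hUly hfy hly hhy
    have hcomp1 : fderiv ℂ (f ∘ h) y = (fderiv ℂ f (h y)).comp (fderiv ℂ h y) :=
      fderiv_comp y hfy.differentiableAt hhy.differentiableAt
    have hcomp2 : fderiv ℂ (l ∘ canonFold n k) y =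
        (fderiv ℂ l (canonFold n k y)).comp (fderiv ℂ (canonFold n k) y) :=
      fderiv_comp y hly.differentiableAt (StmtAux.hasFDerivAt_canonFold k y).differentiableAt
    have hEq' : fderiv ℂ (f ∘ h) y = fderiv ℂ (l ∘ canonFold n k) y := hEq.fderiv_eq
    have hmul : fderiv ℂ f (h y) * fderiv ℂ h y =
        fderiv ℂ l (canonFold n k y) * fderiv ℂ (canonFold n k) y := by
      show (fderiv ℂ f (h y)).comp (fderiv ℂ h y) =
        (fderiv ℂ l (canonFold n k y)).comp (fderiv ℂ (canonFold n k) y)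
      rw [← hcomp1, ← hcomp2, hEq']
    calc IsUnit (fderiv ℂ f (h y))
        ↔ IsUnit (fderiv ℂ f (h y) * fderiv ℂ h y) := (StmtAux.isUnit_mul_iff_left hUhy).symm
      _ ↔ IsUnit (fderiv ℂ l (canonFold n k y) * fderiv ℂ (canonFold n k) y) := by rw [hmul]
      _ ↔ IsUnit (fderiv ℂ (canonFold n k) y) := StmtAux.isUnit_mul_iff_right hUly
      _ ↔ y 0 ≠ 0 := StmtAux.isUnit_fderiv_canonFold hk y
  set G : Cn n → ℂ := fun y => F (h y) with hGdef
  have hFanh0 : AnalyticAt ℂ F (h 0) := by rwa [hh0]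
  have hGan : AnalyticAt ℂ G 0 := hFanh0.comp hhan0
  have hG0 : G 0 = 0 := by rw [hGdef]; simp only [hh0, hF0]
  have hdG : fderiv ℂ G 0 ≠ 0 := by
    have hcomp : fderiv ℂ G 0 = (fderiv ℂ F (h 0)).comp (fderiv ℂ h 0) :=
      fderiv_comp 0 hFanh0.differentiableAt hhan0.differentiableAt
    rw [hh0] at hcomp
    intro hzero
    apply hdF
    have hcz : (fderiv ℂ F 0).comp (fderiv ℂ h 0) = 0 := by rw [← hcomp, hzero]
    refine ContinuousLinearMap.ext fun x => ?_
    have hx : fderiv ℂ h 0 (eh.symm x) = x := by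
      rw [← heh]
      simp
    calc fderiv ℂ F 0 x = fderiv ℂ F 0 (fderiv ℂ h 0 (eh.symm x)) := by rw [hx]
      _ = ((fderiv ℂ F 0).comp (fderiv ℂ h 0)) (eh.symm x) := rfl
      _ = 0 := by rw [hcz]; rfl
  have hFfixh : ∀ᶠ y in nhds (0 : Cn n), (φ (h y) = h y ↔ F (h y) = 0) :=
    hhtend.eventually hFfix
  have hE1h : ∀ᶠ y in nhds (0 : Cn n), φ (h y) = h y → ¬ IsUnit (fderiv ℂ f (h y)) :=
    hhtend.eventually hE1
  have hzeroG : ∀ᶠ y in nhds (0 : Cn n), G y = 0 → y 0 = 0 := by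
    filter_upwards [hFfixh, hE1h, hkey] with y h1 h2 h3 hGy
    by_contra h0
    exact (h2 (h1.mpr hGy)) (h3.mpr h0)
  have hfinal := StmtAux.hyp_lemma hGan hG0 hdG hzeroG
  rw [← hmap, Filter.eventually_map]
  filter_upwards [hkey, hfinal, hFfixh, hE1h] with y h3 h4 h1 h2
  constructor
  · intro hnu
    have hy0 : y 0 = 0 := by
      by_contra h0
      exact hnu (h3.mpr h0)
    exact h1.mpr (h4 hy0)
  · intro hfix
    exact h2 hfix
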